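/- Let à be a real m×m matrix with N(Ã) = N(Ãᵀ), let b ∈ ℝᵐ with b ∉ R(Ã), let b|_{R(Ã)} denote the orthogonal projection of b onto R(Ã), and assume grade(Ã, b|_{R(Ã)}) = k. Then dim K_{k+1}(Ã, b) = k + 1. -/

import Mathlib

open Matrix

/-- The `i`-th Krylov subspace `K_i(A, v) = span {v, Av, …, A^{i-1} v}`. -/
noncomputable def Krylov {m : ℕ} (A : Matrix (Fin m) (Fin m) ℝ)
    (v : EuclideanSpace ℝ (Fin m)) (i : ℕ) : Submodule ℝ (EuclideanSpace ℝ (Fin m)) :=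
  Submodule.span ℝ {w | ∃ j < i, w = (A ^ j).toEuclideanLin v}

lemma Krylov.pow_toEuclideanLin {m : ℕ} (A : Matrix (Fin m) (Fin m) ℝ) (j : ℕ) :
    (A ^ j).toEuclideanLin = (A.toEuclideanLin) ^ j := by
  rw [Matrix.toEuclideanLin_eq_toLin]
  induction j with
  | zero => simp; rfl
  | succ n ih => rw [pow_succ, pow_succ, Matrix.toLin_mul _ (PiLp.basisFun 2 ℝ (Fin m)) _, ih]; rfl

lemma Krylov.succ_eq {m : ℕ} (A : Matrix (Fin m) (Fin m) ℝ)
    (v : EuclideanSpace ℝ (Fin m)) (i : ℕ) :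
    Krylov A v (i + 1) = Krylov A v i ⊔ (Submodule.span ℝ {((A ^ i).toEuclideanLin v)}) := by
  unfold Krylov
  rw [← Submodule.span_union]
  congr 1
  ext w
  simp only [Set.mem_setOf_eq, Set.mem_union, Set.mem_singleton_iff]
  constructor
  · rintro ⟨j, hj, rfl⟩
    rcases Nat.lt_succ_iff_lt_or_eq.mp hj with h | rfl
    · exact Or.inl ⟨j, h, rfl⟩
    · exact Or.inr rfl
  · rintro (⟨j, hj, rfl⟩ | h)
    · exact ⟨j, Nat.lt_succ_of_lt hj, rfl⟩
    · exact ⟨i, Nat.lt_succ_self i, h⟩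

lemma Krylov.mono {m : ℕ} (A : Matrix (Fin m) (Fin m) ℝ)
    (v : EuclideanSpace ℝ (Fin m)) {i j : ℕ} (h : i ≤ j) :
    Krylov A v i ≤ Krylov A v j := by
  apply Submodule.span_mono
  rintro w ⟨n, hn, rfl⟩
  exact ⟨n, lt_of_lt_of_le hn h, rfl⟩

lemma Krylov.finrank_succ_le {m : ℕ} (A : Matrix (Fin m) (Fin m) ℝ)
    (v : EuclideanSpace ℝ (Fin m)) (i : ℕ) :
    Module.finrank ℝ (Krylov A v (i + 1)) ≤ Module.finrank ℝ (Krylov A v i) + 1 := by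
  rw [Krylov.succ_eq]
  have h := Submodule.finrank_sup_add_finrank_inf_eq (Krylov A v i)
    (Submodule.span ℝ {((A ^ i).toEuclideanLin v)})
  have h2 : Module.finrank ℝ (Submodule.span ℝ {((A ^ i).toEuclideanLin v)}) ≤ 1 := by
    by_cases hz : (A ^ i).toEuclideanLin v = 0
    · rw [hz, Submodule.span_zero_singleton]; simp
    · rw [finrank_span_singleton hz]
  omega

/-- If `N(Ã) = N(Ãᵀ)`, `b ∉ R(Ã)`, and `grade(Ã, b|_{R(Ã)}) = k`, then
`dim K_{k+1}(Ã, b) = k + 1`. -/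
theorem finrank_krylov_succ_of_ker_eq_ker_transpose
    {m : ℕ} (A : Matrix (Fin m) (Fin m) ℝ) (b bR : EuclideanSpace ℝ (Fin m)) (k : ℕ)
    (hN : LinearMap.ker A.toEuclideanLin = LinearMap.ker Aᵀ.toEuclideanLin)
    (hb : b ∉ LinearMap.range A.toEuclideanLin)
    -- `bR` is the orthogonal projection of `b` onto `R(Ã)`:
    (hbR : bR ∈ LinearMap.range A.toEuclideanLin)
    (hperp : b - bR ∈ (LinearMap.range A.toEuclideanLin)ᗮ)
    -- `grade(Ã, b|_{R(Ã)}) = k`: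
    (hgrade : Krylov A bR (k + 1) = Krylov A bR k)
    (hmin : ∀ j < k, Krylov A bR (j + 1) ≠ Krylov A bR j) :
    Module.finrank ℝ (Krylov A b (k + 1)) = k + 1 := by
  set T := A.toEuclideanLin with hT
  -- `ker T = (range T)ᗮ`
  have hAH : Aᴴ = Aᵀ := by
    ext i j; simp [Matrix.conjTranspose_apply]
  have hadj : LinearMap.ker (LinearMap.adjoint T) = (LinearMap.range T)ᗮ := by
    ext x
    simp only [LinearMap.mem_ker, Submodule.mem_orthogonal]
    constructor
    · rintro hx u ⟨y, rfl⟩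
      rw [← LinearMap.adjoint_inner_right T, hx, inner_zero_right]
    · intro hx
      have h0 : (inner ℝ (LinearMap.adjoint T x) (LinearMap.adjoint T x) : ℝ) = 0 := by
        rw [LinearMap.adjoint_inner_left]
        have := hx (T (LinearMap.adjoint T x)) ⟨LinearMap.adjoint T x, rfl⟩
        rwa [real_inner_comm] at this
      exact inner_self_eq_zero.mp h0
  have hker : LinearMap.ker T = (LinearMap.range T)ᗮ := by
    rw [hT, hN, ← hAH, Matrix.toEuclideanLin_conjTranspose_eq_adjoint, hadj]
  -- `T b = T bR`
  have hTb : T b = T bR := by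
    have : b - bR ∈ LinearMap.ker T := by rw [hker]; exact hperp
    have h0 : T (b - bR) = 0 := this
    rw [map_sub, sub_eq_zero] at h0
    exact h0
  -- `K_k(A, bR) ≤ range T`
  have hKrange : Krylov A bR k ≤ LinearMap.range T := by
    rw [Krylov, Submodule.span_le]
    rintro w ⟨j, hj, rfl⟩
    rw [Krylov.pow_toEuclideanLin]
    cases j with
    | zero => simpa using hbR
    | succ n =>
      rw [pow_succ', Module.End.mul_apply]
      exact ⟨(T ^ n) bR, rfl⟩
  -- dimensions of the `bR`-Krylov spaces
  have hdim : ∀ j, j ≤ k → Module.finrank ℝ (Krylov A bR j) = j := by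
    intro j
    induction j with
    | zero =>
      intro _
      have hbot : Krylov A bR 0 = ⊥ := by
        rw [Krylov]; convert Submodule.span_empty with w
        simp
      rw [hbot]; exact finrank_bot ℝ _
    | succ n ih =>
      intro hn
      have hnk : n < k := Nat.lt_of_succ_le hn
      have h1 := ih (le_of_lt hnk)
      have hlt : Krylov A bR n < Krylov A bR (n + 1) :=
        lt_of_le_of_ne (Krylov.mono A bR (Nat.le_succ n)) (Ne.symm (hmin n hnk))
      have h2 := Submodule.finrank_lt_finrank_of_lt hlt
      have h3 := Krylov.finrank_succ_le A bR n
      omega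
  have hKk : Module.finrank ℝ (Krylov A bR k) = k := hdim k le_rfl
  -- `W = T(K_k(A, bR))` has dimension `k`
  set W := Submodule.map T (Krylov A bR k) with hW
  have hWrange : W ≤ LinearMap.range T := by
    rintro w ⟨x, _, rfl⟩; exact ⟨x, rfl⟩
  have hdisj : Disjoint (LinearMap.range T) (LinearMap.range T)ᗮ :=
    Submodule.orthogonal_disjoint _
  have hWdim : Module.finrank ℝ W = k := by
    set f := T.domRestrict (Krylov A bR k) with hf
    have hkerf : LinearMap.ker f = ⊥ := by
      rw [LinearMap.ker_eq_bot']
      rintro ⟨x, hx⟩ hfx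
      have hx0 : T x = 0 := hfx
      have hxperp : x ∈ (LinearMap.range T)ᗮ := by rw [← hker]; exact hx0
      have : x = 0 := Submodule.disjoint_def.mp hdisj x (hKrange hx) hxperp
      exact Subtype.ext this
    have hrf : LinearMap.range f = W := LinearMap.range_domRestrict _ _
    have := LinearMap.finrank_range_add_finrank_ker f
    rw [hrf, hkerf, finrank_bot, hKk] at this
    omega
  have hcomm : ∀ (n : ℕ) (u : EuclideanSpace ℝ (Fin m)), T ((T ^ n) u) = (T ^ n) (T u) := by
    intro n u
    rw [← Module.End.mul_apply, ← pow_succ', pow_succ, Module.End.mul_apply]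
  -- `K_{k+1}(A, b) = span{b} ⊔ W`
  have hKb : Krylov A b (k + 1) = (Submodule.span ℝ {b}) ⊔ W := by
    rw [hW, Krylov, Krylov, Submodule.map_span, ← Submodule.span_union]
    congr 1
    ext w
    simp only [Set.mem_setOf_eq, Set.mem_union, Set.mem_singleton_iff, Set.mem_image]
    constructor
    · rintro ⟨j, hj, rfl⟩
      cases j with
      | zero =>
        left; rw [Krylov.pow_toEuclideanLin, pow_zero, Module.End.one_apply]
      | succ n =>
        right
        refine ⟨(A ^ n).toEuclideanLin bR, ⟨n, Nat.lt_of_succ_lt_succ hj, rfl⟩, ?_⟩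
        simp only [Krylov.pow_toEuclideanLin]
        rw [pow_succ, Module.End.mul_apply, hTb, hcomm]
    · rintro (rfl | ⟨x, ⟨n, hn, rfl⟩, rfl⟩)
      · exact ⟨0, Nat.succ_pos k,
          by rw [Krylov.pow_toEuclideanLin, pow_zero, Module.End.one_apply]⟩
      · refine ⟨n + 1, Nat.succ_lt_succ hn, ?_⟩
        simp only [Krylov.pow_toEuclideanLin]
        rw [pow_succ, Module.End.mul_apply, hTb, hcomm]
  -- conclude
  have hb0 : b ≠ 0 := fun h => hb (h ▸ (LinearMap.range T).zero_mem)
  have hinf : (Submodule.span ℝ {b}) ⊓ W = ⊥ := by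
    rw [eq_bot_iff]
    rintro x ⟨hx1, hx2⟩
    obtain ⟨c, rfl⟩ := Submodule.mem_span_singleton.mp hx1
    by_cases hc : c = 0
    · simp [hc]
    · exfalso
      apply hb
      have : b = c⁻¹ • (c • b) := by rw [smul_smul, inv_mul_cancel₀ hc, one_smul]
      rw [this]
      exact hWrange (W.smul_mem c⁻¹ hx2)
  have hsum := Submodule.finrank_sup_add_finrank_inf_eq (Submodule.span ℝ {b}) W
  rw [hinf, finrank_bot, finrank_span_singleton hb0, hWdim] at hsum
  rw [hKb]
  omega
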